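/- For every integer g ≥ 1 one has a_{g,0} = a_{g,3g−1} = 1 and a_{g,1} = a_{g,3g−2} = 1 − 2/(6g−1), and for every integer k with 2 ≤ k ≤ 3g−3 the strict inequalities 1 − 2/(6g−1) < a_{g,k} < 1 hold. -/

import Mathlib

open Nat Real Filter


/-- The piecewise quantity `D(g,k)` from the recurrence for normalized
2-correlators: `D(g,k)` depends on the residue of `k` mod 3, with `k = 3j-1`,
`k = 3j`, or `k = 3j+1` respectively. -/
noncomputable def Dterm (g k : ℕ) : ℚ :=
  if k % 3 = 2 then
    -- k = 3j - 1, with j = (k+1)/3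
    ((6 * ((k + 1) / 3) - 1)‼ : ℚ) / (((k + 1) / 3)! : ℚ) *
      (((g - 1)! : ℚ) / ((g - (k + 1) / 3)! : ℚ)) * ((g : ℚ) - 2 * ((k + 1) / 3))
  else if k % 3 = 0 then
    -- k = 3j, with j = k/3
    -2 * ((6 * (k / 3) + 1)‼ : ℚ) / ((k / 3)! : ℚ) *
      (((g - 1)! : ℚ) / ((g - 1 - k / 3)! : ℚ))
  else
    -- k = 3j + 1, with j = (k-1)/3
    2 * ((6 * ((k - 1) / 3) + 3)‼ : ℚ) / (((k - 1) / 3)! : ℚ) *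
      (((g - 1)! : ℚ) / ((g - 1 - (k - 1) / 3)! : ℚ))

/-- `a : ℕ → ℚ` is the sequence `(a_{g,k})_{0 ≤ k ≤ 3g-1}` of normalized
2-correlators: `a 0 = 1`, the recurrence
`a (k+1) - a k = ((6g-3-2k)‼/(6g-1)‼) · D(g,k)` for `0 ≤ k ≤ ⌊(3g-1)/2⌋ - 1`,
and the symmetry `a k = a (3g-1-k)` for `0 ≤ k ≤ 3g-1`. -/
def IsCorr (g : ℕ) (a : ℕ → ℚ) : Prop :=
  a 0 = 1 ∧
  (∀ k : ℕ, k + 1 ≤ (3 * g - 1) / 2 →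
    a (k + 1) - a k = ((6 * g - 3 - 2 * k)‼ : ℚ) / ((6 * g - 1)‼ : ℚ) * Dterm g k) ∧
  (∀ k : ℕ, k ≤ 3 * g - 1 → a k = a (3 * g - 1 - k))


/-- numerator-over-denominator form of `|Δ_{3j}|`. -/
noncomputable def Tq (g j : ℕ) : ℚ :=
  ((2 * (6*j+1)‼ * (g-1)! * (6*g-3-6*j)‼ : ℕ) : ℚ) /
    ((j ! * (g-1-j)! * (6*g-1)‼ : ℕ) : ℚ)

noncomputable def Pq (g j : ℕ) : ℚ :=
  ((2 * (6*j+3)‼ * (g-1)! * (6*g-5-6*j)‼ : ℕ) : ℚ) /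
    ((j ! * (g-1-j)! * (6*g-1)‼ : ℕ) : ℚ)

noncomputable def Qq (g j : ℕ) : ℚ :=
  (((6*j+5)‼ * (g-1)! * (g-2*j-2) * (6*g-7-6*j)‼ : ℕ) : ℚ) /
    (((j+1)! * (g-1-j)! * (6*g-1)‼ : ℕ) : ℚ)

lemma Tq_nonneg (g j : ℕ) : 0 ≤ Tq g j := by unfold Tq; positivity
lemma Pq_nonneg (g j : ℕ) : 0 ≤ Pq g j := by unfold Pq; positivity
lemma Qq_nonneg (g j : ℕ) : 0 ≤ Qq g j := by unfold Qq; positivity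

lemma stepT (g : ℕ) (a : ℕ → ℚ) (ha : IsCorr g a) (j : ℕ)
    (hd : 3*j+1 ≤ (3*g-1)/2) :
    a (3*j+1) - a (3*j) = - Tq g j := by
  have h := ha.2.1 (3*j) hd
  rw [h]
  unfold Dterm Tq
  rw [if_neg (by omega), if_pos (by omega)]
  rw [Nat.mul_div_cancel_left j (by norm_num)]
  rw [show 6*g-3-2*(3*j) = 6*g-3-6*j by omega]
  have h1 : ((j ! : ℕ):ℚ) ≠ 0 := by positivity
  have h2 : (((g-1-j)! : ℕ):ℚ) ≠ 0 := by positivity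
  have h3 : (((6*g-1)‼ : ℕ):ℚ) ≠ 0 := by positivity
  push_cast
  field_simp

lemma stepP (g : ℕ) (a : ℕ → ℚ) (ha : IsCorr g a) (j : ℕ) (hj : 1 ≤ j)
    (hd : 3*j+2 ≤ (3*g-1)/2) :
    a (3*j+2) - a (3*j+1) = Pq g j := by
  have h := ha.2.1 (3*j+1) (by omega)
  rw [h]
  unfold Dterm Pq
  rw [if_neg (by omega), if_neg (by omega)]
  rw [show (3*j+1-1)/3 = j by omega]
  rw [show 6*g-3-2*(3*j+1) = 6*g-5-6*j by omega]
  have h1 : ((j ! : ℕ):ℚ) ≠ 0 := by positivity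
  have h2 : (((g-1-j)! : ℕ):ℚ) ≠ 0 := by positivity
  have h3 : (((6*g-1)‼ : ℕ):ℚ) ≠ 0 := by positivity
  push_cast
  field_simp

lemma stepQ (g : ℕ) (a : ℕ → ℚ) (ha : IsCorr g a) (j : ℕ)
    (hd : 3*j+3 ≤ (3*g-1)/2) :
    a (3*j+3) - a (3*j+2) = Qq g j := by
  have hg : 2*j+3 ≤ g := by omega
  have h := ha.2.1 (3*j+2) (by omega)
  rw [show 3*j+2+1 = 3*j+3 from rfl] at h
  rw [h]
  unfold Dterm Qq
  rw [if_pos (by omega)]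
  rw [show (3*j+2+1)/3 = j+1 by omega]
  rw [show 6*(j+1)-1 = 6*j+5 by omega]
  rw [show g-(j+1) = g-1-j by omega]
  rw [show 6*g-3-2*(3*j+2) = 6*g-7-6*j by omega]
  have h1 : (((j+1) ! : ℕ):ℚ) ≠ 0 := by positivity
  have h2 : (((g-1-j)! : ℕ):ℚ) ≠ 0 := by positivity
  have h3 : (((6*g-1)‼ : ℕ):ℚ) ≠ 0 := by positivity
  have hc : ((g - 2*j-2 : ℕ):ℚ) = (g:ℚ) - (2*(j:ℚ)+2) := by
    rw [show g-2*j-2 = g-(2*j+2) by omega, Nat.cast_sub (by omega)]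
    push_cast; ring
  push_cast [hc]
  field_simp
  ring

lemma PleT (g j : ℕ) (h : 2*j+2 ≤ g) : Pq g j ≤ Tq g j := by
  unfold Pq Tq
  have hden : (0:ℚ) < ((j ! * (g-1-j)! * (6*g-1)‼ : ℕ) : ℚ) := by positivity
  rw [div_le_div_iff_of_pos_right hden]
  have e1 : (6*j+3)‼ = (6*j+3) * (6*j+1)‼ := by
    rw [show 6*j+3 = (6*j+1)+2 by omega, Nat.doubleFactorial_add_two]
  have e2 : (6*g-3-6*j)‼ = (6*g-3-6*j) * (6*g-5-6*j)‼ := by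
    rw [show 6*g-3-6*j = (6*g-5-6*j)+2 by omega, Nat.doubleFactorial_add_two]
  have key : 2 * (6*j+3)‼ * (g-1)! * (6*g-5-6*j)‼ ≤
      2 * (6*j+1)‼ * (g-1)! * (6*g-3-6*j)‼ := by
    rw [e1, e2]
    calc 2 * ((6*j+3) * (6*j+1)‼) * (g-1)! * (6*g-5-6*j)‼
        = (6*j+3) * (2 * (6*j+1)‼ * (g-1)! * (6*g-5-6*j)‼) := by ring
      _ ≤ (6*g-3-6*j) * (2 * (6*j+1)‼ * (g-1)! * (6*g-5-6*j)‼) :=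
          Nat.mul_le_mul_right _ (by omega)
      _ = 2 * (6*j+1)‼ * (g-1)! * ((6*g-3-6*j) * (6*g-5-6*j)‼) := by ring
  exact_mod_cast key

lemma QleT (g j : ℕ) (h : 2*j+3 ≤ g) : 2 * Qq g j ≤ Tq g j := by
  unfold Qq Tq
  rw [← mul_div_assoc, div_le_div_iff₀ (by positivity) (by positivity)]
  have core : (6*j+5) * ((6*j+3) * (g-2*j-2)) ≤ (j+1) * ((6*g-3-6*j) * (6*g-5-6*j)) := by
    obtain ⟨s, rfl⟩ : ∃ s, g = 2*j+3+s := ⟨g-(2*j+3), by omega⟩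
    rw [show 2*j+3+s-2*j-2 = s+1 by omega, show 6*(2*j+3+s)-3-6*j = 6*j+6*s+15 by omega,
      show 6*(2*j+3+s)-5-6*j = 6*j+6*s+13 by omega]
    have expand : (j+1) * ((6*j+6*s+15) * (6*j+6*s+13)) =
        (6*j+5) * ((6*j+3) * (s+1)) +
        (180 + 153*s + 36*s^2 + 315*j + 192*j*s + 36*j*s^2 + 168*j^2 + 36*j^2*s + 36*j^3) := by
      ring
    rw [expand]
    exact Nat.le_add_right _ _
  have e1 : (6*j+5)‼ = (6*j+5) * ((6*j+3) * (6*j+1)‼) := by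
    rw [show 6*j+5 = (6*j+3)+2 by omega, Nat.doubleFactorial_add_two,
      show 6*j+3 = (6*j+1)+2 by omega, Nat.doubleFactorial_add_two]
  have e2 : (6*g-3-6*j)‼ = (6*g-3-6*j) * ((6*g-5-6*j) * (6*g-7-6*j)‼) := by
    rw [show 6*g-3-6*j = (6*g-5-6*j)+2 by omega, Nat.doubleFactorial_add_two,
      show 6*g-5-6*j = (6*g-7-6*j)+2 by omega, Nat.doubleFactorial_add_two]
  have e3 : (j+1)! = (j+1) * j ! := Nat.factorial_succ j
  have key : 2 * ((6*j+5)‼ * (g-1)! * (g-2*j-2) * (6*g-7-6*j)‼) *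
      (j ! * (g-1-j)! * (6*g-1)‼) ≤
      (2 * (6*j+1)‼ * (g-1)! * (6*g-3-6*j)‼) * ((j+1)! * (g-1-j)! * (6*g-1)‼) := by
    rw [e1, e2, e3]
    calc 2 * ((6*j+5) * ((6*j+3) * (6*j+1)‼) * (g-1)! * (g-2*j-2) * (6*g-7-6*j)‼) *
        (j ! * (g-1-j)! * (6*g-1)‼)
        = ((6*j+5) * ((6*j+3) * (g-2*j-2))) *
            (2 * (6*j+1)‼ * (g-1)! * (6*g-7-6*j)‼ * (j ! * (g-1-j)! * (6*g-1)‼)) := by ring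
      _ ≤ ((j+1) * ((6*g-3-6*j) * (6*g-5-6*j))) *
            (2 * (6*j+1)‼ * (g-1)! * (6*g-7-6*j)‼ * (j ! * (g-1-j)! * (6*g-1)‼)) :=
          Nat.mul_le_mul_right _ core
      _ = (2 * (6*j+1)‼ * (g-1)! * ((6*g-3-6*j) * ((6*g-5-6*j) * (6*g-7-6*j)‼))) *
            ((j+1) * j ! * (g-1-j)! * (6*g-1)‼) := by ring
  exact_mod_cast key

lemma TmonoStep (g j : ℕ) (h : 2*j+3 ≤ g) : Tq g (j+1) ≤ Tq g j := by
  unfold Tq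
  rw [div_le_div_iff₀ (by positivity) (by positivity)]
  have core : ((6*j+3) * ((6*j+5) * ((6*j+7) * (g-1-j)))) ≤
      (j+1) * ((6*g-3-6*j) * ((6*g-5-6*j) * (6*g-7-6*j))) := by
    obtain ⟨s, rfl⟩ : ∃ s, g = 2*j+3+s := ⟨g-(2*j+3), by omega⟩
    rw [show 2*j+3+s-1-j = j+s+2 by omega, show 6*(2*j+3+s)-3-6*j = 6*j+6*s+15 by omega,
      show 6*(2*j+3+s)-5-6*j = 6*j+6*s+13 by omega,
      show 6*(2*j+3+s)-7-6*j = 6*j+6*s+11 by omega]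
    have expand : (j+1) * ((6*j+6*s+15) * ((6*j+6*s+13) * (6*j+6*s+11))) =
        (6*j+3) * ((6*j+5) * ((6*j+7) * (j+s+2))) +
        (1935 + 2913*s + 1404*s^2 + 216*s^3 + 4206*j + 5400*j*s + 2052*j*s^2 + 216*j*s^3 +
          2916*j^2 + 2916*j^2*s + 648*j^2*s^2 + 648*j^3 + 432*j^3*s) := by ring
    rw [expand]
    exact Nat.le_add_right _ _
  have e1 : (6*(j+1)+1)‼ = (6*j+7) * ((6*j+5) * ((6*j+3) * (6*j+1)‼)) := by
    rw [show 6*(j+1)+1 = (6*j+5)+2 by omega, Nat.doubleFactorial_add_two,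
      show 6*j+5 = (6*j+3)+2 by omega, Nat.doubleFactorial_add_two,
      show 6*j+3 = (6*j+1)+2 by omega, Nat.doubleFactorial_add_two]
  have e2 : (6*g-3-6*j)‼ = (6*g-3-6*j) * ((6*g-5-6*j) * ((6*g-7-6*j) * (6*g-3-6*(j+1))‼)) := by
    rw [show 6*g-3-6*j = (6*g-5-6*j)+2 by omega, Nat.doubleFactorial_add_two,
      show 6*g-5-6*j = (6*g-7-6*j)+2 by omega, Nat.doubleFactorial_add_two,
      show 6*g-7-6*j = (6*g-3-6*(j+1))+2 by omega, Nat.doubleFactorial_add_two]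
  have e3 : (j+1)! = (j+1) * j ! := Nat.factorial_succ j
  have e4 : (g-1-j)! = (g-1-j) * (g-1-(j+1))! := by
    rw [show g-1-j = (g-1-(j+1))+1 by omega, Nat.factorial_succ]
  have key : 2 * (6*(j+1)+1)‼ * (g-1)! * (6*g-3-6*(j+1))‼ *
      (j ! * (g-1-j)! * (6*g-1)‼) ≤
      2 * (6*j+1)‼ * (g-1)! * (6*g-3-6*j)‼ * ((j+1)! * (g-1-(j+1))! * (6*g-1)‼) := by
    rw [e1, e2, e3, e4]
    calc 2 * ((6*j+7) * ((6*j+5) * ((6*j+3) * (6*j+1)‼))) * (g-1)! * (6*g-3-6*(j+1))‼ *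
        (j ! * ((g-1-j) * (g-1-(j+1))!) * (6*g-1)‼)
        = ((6*j+3) * ((6*j+5) * ((6*j+7) * (g-1-j)))) *
            (2 * (6*j+1)‼ * (g-1)! * (6*g-3-6*(j+1))‼ * (j ! * (g-1-(j+1))! * (6*g-1)‼)) := by
          ring
      _ ≤ ((j+1) * ((6*g-3-6*j) * ((6*g-5-6*j) * (6*g-7-6*j)))) *
            (2 * (6*j+1)‼ * (g-1)! * (6*g-3-6*(j+1))‼ * (j ! * (g-1-(j+1))! * (6*g-1)‼)) :=
          Nat.mul_le_mul_right _ core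
      _ = 2 * (6*j+1)‼ * (g-1)! *
            ((6*g-3-6*j) * ((6*g-5-6*j) * ((6*g-7-6*j) * (6*g-3-6*(j+1))‼))) *
            ((j+1) * j ! * (g-1-(j+1))! * (6*g-1)‼) := by ring
  exact_mod_cast key

lemma TleT1 (g : ℕ) : ∀ j, 1 ≤ j → 2*j+1 ≤ g → Tq g j ≤ Tq g 1 := by
  intro j
  induction j with
  | zero => omega
  | succ n ih =>
    intro _ hd
    rcases Nat.eq_or_lt_of_le (show 1 ≤ n+1 by omega) with h1 | h1
    · rw [← h1]
    · calc Tq g (n+1) ≤ Tq g n := TmonoStep g n (by omega)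
        _ ≤ Tq g 1 := ih (by omega) (by omega)

lemma Tq1_eq (n : ℕ) :
    Tq (n+2) 1 = 210*((n:ℚ)+1)*(((6*n+3)‼:ℕ):ℚ)/(((6*n+11)‼:ℕ):ℚ) := by
  unfold Tq
  rw [show 6*(n+2)-3-6*1 = 6*n+3 by omega, show 6*(n+2)-1 = 6*n+11 by omega,
    show n+2-1 = n+1 by omega, show n+1-1 = n by omega,
    show (6*1+1)‼ = 105 by decide, Nat.factorial_succ, Nat.factorial_one]
  have hF : ((n ! : ℕ) : ℚ) ≠ 0 := by positivity
  have hDB : (((6*n+11)‼ : ℕ) : ℚ) ≠ 0 := by positivity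
  push_cast
  field_simp

lemma Qq0_eq (n : ℕ) :
    Qq (n+2) 0 = 15*(n:ℚ)*(((6*n+5)‼:ℕ):ℚ)/(((6*n+11)‼:ℕ):ℚ) := by
  unfold Qq
  rw [show 6*(n+2)-7-6*0 = 6*n+5 by omega, show 6*(n+2)-1 = 6*n+11 by omega,
    show n+2-1-0 = n+1 by omega, show n+2-2*0-2 = n by omega,
    show (6*0+5)‼ = 15 by decide, show (0+1)! = 1 by decide]
  have hF : (((n+1) ! : ℕ) : ℚ) ≠ 0 := by positivity
  have hDB : (((6*n+11)‼ : ℕ) : ℚ) ≠ 0 := by positivity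
  push_cast
  field_simp

lemma DB_eq (n : ℕ) : (((6*n+11)‼:ℕ):ℚ) =
    (6*(n:ℚ)+11)*((6*(n:ℚ)+9)*((6*(n:ℚ)+7)*((6*(n:ℚ)+5)*(((6*n+3)‼:ℕ):ℚ)))) := by
  have e : (6*n+11)‼ = (6*n+11)*((6*n+9)*((6*n+7)*((6*n+5)*(6*n+3)‼))) := by
    rw [show 6*n+11 = (6*n+9)+2 by omega, Nat.doubleFactorial_add_two,
      show 6*n+9 = (6*n+7)+2 by omega, Nat.doubleFactorial_add_two,
      show 6*n+7 = (6*n+5)+2 by omega, Nat.doubleFactorial_add_two,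
      show 6*n+5 = (6*n+3)+2 by omega, Nat.doubleFactorial_add_two]
  rw [e]; push_cast; ring

lemma X7_eq (n : ℕ) : (((6*n+7)‼:ℕ):ℚ) = (6*(n:ℚ)+7)*((6*(n:ℚ)+5)*(((6*n+3)‼:ℕ):ℚ)) := by
  have e : (6*n+7)‼ = (6*n+7)*((6*n+5)*(6*n+3)‼) := by
    rw [show 6*n+7 = (6*n+5)+2 by omega, Nat.doubleFactorial_add_two,
      show 6*n+5 = (6*n+3)+2 by omega, Nat.doubleFactorial_add_two]
  rw [e]; push_cast; ring

lemma X5_eq (n : ℕ) : (((6*n+5)‼:ℕ):ℚ) = (6*(n:ℚ)+5)*(((6*n+3)‼:ℕ):ℚ) := by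
  have e : (6*n+5)‼ = (6*n+5)*(6*n+3)‼ := by
    rw [show 6*n+5 = (6*n+3)+2 by omega, Nat.doubleFactorial_add_two]
  rw [e]; push_cast; ring

lemma final_lower (n m : ℕ) (hm : 2*m ≤ n+1) :
    (m:ℚ) * Tq (n+2) 1 < 6*((6*(n+2)-5)‼:ℚ)/((6*(n+2)-1)‼:ℚ) := by
  rw [show 6*(n+2)-5 = 6*n+7 by omega, show 6*(n+2)-1 = 6*n+11 by omega,
    Tq1_eq, X7_eq]
  have hX : (0:ℚ) < (((6*n+3)‼:ℕ):ℚ) := by positivity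
  have hDB : (0:ℚ) < (((6*n+11)‼:ℕ):ℚ) := by positivity
  have hmq : 2*(m:ℚ) ≤ (n:ℚ)+1 := by exact_mod_cast hm
  have hn : (0:ℚ) ≤ (n:ℚ) := by positivity
  have hm0 : (0:ℚ) ≤ (m:ℚ) := by positivity
  calc (m:ℚ) * (210*((n:ℚ)+1)*(((6*n+3)‼:ℕ):ℚ)/(((6*n+11)‼:ℕ):ℚ))
      = ((m:ℚ) * (210*((n:ℚ)+1))) * (((6*n+3)‼:ℕ):ℚ) / (((6*n+11)‼:ℕ):ℚ) := by ring
    _ < (6*((6*(n:ℚ)+7)*((6*(n:ℚ)+5)))) * (((6*n+3)‼:ℕ):ℚ) / (((6*n+11)‼:ℕ):ℚ) := by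
        rw [div_lt_div_iff_of_pos_right hDB, mul_lt_mul_iff_of_pos_right hX]
        nlinarith [mul_le_mul_of_nonneg_right hmq (show (0:ℚ) ≤ (n:ℚ)+1 by positivity)]
    _ = 6*((6*(n:ℚ)+7)*((6*(n:ℚ)+5)*(((6*n+3)‼:ℕ):ℚ)))/(((6*n+11)‼:ℕ):ℚ) := by ring

lemma final_upper (n m1 m2 : ℕ) (h1 : 2*m1 ≤ n+1) (h2 : 2*m2 ≤ n+1) :
    6*((6*(n+2)-5)‼:ℚ)/((6*(n+2)-1)‼:ℚ) + Qq (n+2) 0 + (m1:ℚ)*Tq (n+2) 1 +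
      (m2:ℚ)*(Tq (n+2) 1/2) < 2/(6*((n+2:ℕ):ℚ)-1) := by
  rw [show 6*(n+2)-5 = 6*n+7 by omega, show 6*(n+2)-1 = 6*n+11 by omega,
    Tq1_eq, Qq0_eq, X7_eq, X5_eq]
  have hX : (0:ℚ) < (((6*n+3)‼:ℕ):ℚ) := by positivity
  have hDB : (0:ℚ) < (((6*n+11)‼:ℕ):ℚ) := by positivity
  have h1q : 2*(m1:ℚ) ≤ (n:ℚ)+1 := by exact_mod_cast h1
  have h2q : 2*(m2:ℚ) ≤ (n:ℚ)+1 := by exact_mod_cast h2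
  have hn : (0:ℚ) ≤ (n:ℚ) := by positivity
  have hrhs : 2/(6*((n+2:ℕ):ℚ)-1) =
      (2*((6*(n:ℚ)+9)*((6*(n:ℚ)+7)*(6*(n:ℚ)+5)))) * (((6*n+3)‼:ℕ):ℚ) /
        (((6*n+11)‼:ℕ):ℚ) := by
    rw [DB_eq]
    have h11 : (6*(n:ℚ)+11) ≠ 0 := by positivity
    push_cast
    rw [show 6*((n:ℚ)+2)-1 = 6*(n:ℚ)+11 by ring]
    field_simp
  rw [hrhs]
  calc 6*((6*(n:ℚ)+7)*((6*(n:ℚ)+5)*(((6*n+3)‼:ℕ):ℚ)))/(((6*n+11)‼:ℕ):ℚ) +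
        15*(n:ℚ)*((6*(n:ℚ)+5)*(((6*n+3)‼:ℕ):ℚ))/(((6*n+11)‼:ℕ):ℚ) +
        (m1:ℚ)*(210*((n:ℚ)+1)*(((6*n+3)‼:ℕ):ℚ)/(((6*n+11)‼:ℕ):ℚ)) +
        (m2:ℚ)*(210*((n:ℚ)+1)*(((6*n+3)‼:ℕ):ℚ)/(((6*n+11)‼:ℕ):ℚ)/2)
      = (6*((6*(n:ℚ)+7)*(6*(n:ℚ)+5)) + 15*(n:ℚ)*(6*(n:ℚ)+5) + (m1:ℚ)*(210*((n:ℚ)+1)) +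
          (m2:ℚ)*(105*((n:ℚ)+1))) * (((6*n+3)‼:ℕ):ℚ) / (((6*n+11)‼:ℕ):ℚ) := by ring
    _ < (2*((6*(n:ℚ)+9)*((6*(n:ℚ)+7)*(6*(n:ℚ)+5)))) * (((6*n+3)‼:ℕ):ℚ) /
          (((6*n+11)‼:ℕ):ℚ) := by
        rw [div_lt_div_iff_of_pos_right hDB, mul_lt_mul_iff_of_pos_right hX]
        nlinarith [mul_le_mul_of_nonneg_right h1q (show (0:ℚ) ≤ (n:ℚ)+1 by positivity),
          mul_le_mul_of_nonneg_right h2q (show (0:ℚ) ≤ (n:ℚ)+1 by positivity),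
          mul_nonneg (mul_nonneg hn hn) hn, sq_nonneg (n:ℚ)]

lemma a1_eq (g : ℕ) (hg : 1 ≤ g) (a : ℕ → ℚ) (ha : IsCorr g a) :
    a 1 = 1 - 2/(6*(g:ℚ)-1) := by
  have h := ha.2.1 0 (by omega)
  rw [ha.1] at h
  unfold Dterm at h
  rw [if_neg (by norm_num), if_pos (by norm_num)] at h
  norm_num at h
  have hfac : (((g-1)! : ℕ):ℚ) ≠ 0 := by positivity
  rw [div_self hfac] at h
  have hE : (6*g-1)‼ = (6*g-1)*(6*g-3)‼ := by
    rw [show 6*g-1 = (6*g-3)+2 by omega, Nat.doubleFactorial_add_two]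
  rw [hE] at h
  have hY : (((6*g-3)‼ : ℕ):ℚ) ≠ 0 := by positivity
  have hc : ((6*g-1:ℕ):ℚ) = 6*(g:ℚ)-1 := by
    rw [Nat.cast_sub (by omega)]; push_cast; ring
  have h61 : (6*(g:ℚ)-1) ≠ 0 := by
    rw [← hc]; exact Nat.cast_ne_zero.2 (by omega)
  push_cast [hc] at h
  have e : (((6*g-3)‼ : ℕ):ℚ)/((6*(g:ℚ)-1) * (((6*g-3)‼ : ℕ):ℚ)) = 1/(6*(g:ℚ)-1) := by
    field_simp
  rw [e] at h
  linear_combination h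

lemma a2_eq (g : ℕ) (hg : 2 ≤ g) (a : ℕ → ℚ) (ha : IsCorr g a) :
    a 2 = a 1 + 6*(((6*g-5)‼:ℕ):ℚ)/(((6*g-1)‼:ℕ):ℚ) := by
  have h := ha.2.1 1 (by omega)
  unfold Dterm at h
  rw [if_neg (by norm_num), if_neg (by norm_num)] at h
  norm_num at h
  rw [show 6*g-3-2 = 6*g-5 by omega] at h
  have hfac : (((g-1)! : ℕ):ℚ) ≠ 0 := by positivity
  rw [div_self hfac] at h
  have hB : (((6*g-1)‼ : ℕ):ℚ) ≠ 0 := by positivity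
  rw [mul_comm] at h
  rw [show ((6:ℚ)*1) = 6 by norm_num] at h
  linear_combination h




lemma bounds (g : ℕ) (hg : 2 ≤ g) (a : ℕ → ℚ) (ha : IsCorr g a) :
    ∀ k, 2 ≤ k → k ≤ (3*g-1)/2 →
    a 2 - (((k-1)/3 : ℕ):ℚ) * Tq g 1 ≤ a k ∧
    a k ≤ a 2 + Qq g 0 + (((k-2)/3 : ℕ):ℚ) * Tq g 1 + (((k-3)/3 : ℕ):ℚ) * (Tq g 1/2) := by
  intro k hk
  induction k, hk using Nat.le_induction with
  | base =>
    intro _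
    push_cast
    constructor
    · linarith [Tq_nonneg g 1]
    · linarith [Qq_nonneg g 0, Tq_nonneg g 1]
  | succ k hk ih =>
    intro hk1
    obtain ⟨hl, hu⟩ := ih (by omega)
    rcases (show k%3 = 0 ∨ k%3 = 1 ∨ k%3 = 2 by omega) with h3 | h3 | h3
    · -- k = 3j, j ≥ 1
      obtain ⟨j, rfl⟩ : ∃ j, k = 3*j := ⟨k/3, by omega⟩
      have hj : 1 ≤ j := by omega
      have hstep := stepT g a ha j (by omega)
      have hT1 : Tq g j ≤ Tq g 1 := TleT1 g j hj (by omega)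
      simp only [show (3*j-1)/3 = j-1 by omega, show (3*j-2)/3 = j-1 by omega,
        show (3*j-3)/3 = j-1 by omega] at hl hu
      simp only [show (3*j+1-1)/3 = j by omega, show (3*j+1-2)/3 = j-1 by omega,
        show (3*j+1-3)/3 = j-1 by omega]
      simp only [Nat.cast_sub hj] at hl hu ⊢
      push_cast at hl hu ⊢
      constructor
      · linarith
      · linarith [Tq_nonneg g j]
    · -- k = 3j+1, j ≥ 1
      obtain ⟨j, rfl⟩ : ∃ j, k = 3*j+1 := ⟨k/3, by omega⟩
      have hj : 1 ≤ j := by omega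
      have hstep := stepP g a ha j hj (by omega)
      have hPT : Pq g j ≤ Tq g j := PleT g j (by omega)
      have hT1 : Tq g j ≤ Tq g 1 := TleT1 g j hj (by omega)
      simp only [show (3*j+1-1)/3 = j by omega, show (3*j+1-2)/3 = j-1 by omega,
        show (3*j+1-3)/3 = j-1 by omega] at hl hu
      simp only [show (3*j+1+1-1)/3 = j by omega, show (3*j+1+1-2)/3 = j by omega,
        show (3*j+1+1-3)/3 = j-1 by omega]
      simp only [Nat.cast_sub hj] at hl hu ⊢
      push_cast at hl hu ⊢
      constructor
      · linarith [Pq_nonneg g j]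
      · linarith
    · -- k = 3j+2
      obtain ⟨j, rfl⟩ : ∃ j, k = 3*j+2 := ⟨k/3, by omega⟩
      have hstep := stepQ g a ha j (by omega)
      rw [show 3*j+2+1 = 3*j+3 by omega] at hstep ⊢
      rcases Nat.eq_zero_or_pos j with hj | hj
      · subst hj
        norm_num at hstep hl hu ⊢
        push_cast
        constructor
        · linarith [Qq_nonneg g 0]
        · linarith
      · have hQT : 2 * Qq g j ≤ Tq g j := QleT g j (by omega)
        have hT1 : Tq g j ≤ Tq g 1 := TleT1 g j hj (by omega)
        simp only [show (3*j+2-1)/3 = j by omega, show (3*j+2-2)/3 = j by omega,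
          show (3*j+2-3)/3 = j-1 by omega] at hl hu
        simp only [show (3*j+3-1)/3 = j by omega, show (3*j+3-2)/3 = j by omega,
          show (3*j+3-3)/3 = j by omega]
        simp only [Nat.cast_sub hj] at hl hu
        push_cast at hl hu ⊢
        constructor
        · linarith [Qq_nonneg g j]
        · linarith


lemma middle (g : ℕ) (hg : 2 ≤ g) (a : ℕ → ℚ) (ha : IsCorr g a) (k : ℕ)
    (h2 : 2 ≤ k) (hM : k ≤ (3*g-1)/2) :
    1 - 2/(6*(g:ℚ)-1) < a k ∧ a k < 1 := by
  obtain ⟨hl, hu⟩ := bounds g hg a ha k h2 hM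
  have ha1 := a1_eq g (by omega) a ha
  have ha2 := a2_eq g (by omega) a ha
  obtain ⟨n, rfl⟩ : ∃ n, g = n+2 := ⟨g-2, by omega⟩
  have hfl := final_lower n ((k-1)/3) (by omega)
  have hfu := final_upper n ((k-2)/3) ((k-3)/3) (by omega) (by omega)
  constructor
  · linarith
  · linarith

/-- `R(g,j) = C(3g,3j)·C(g,j)/C(6g,6j)`. -/
noncomputable def R (g j : ℕ) : ℚ :=
  (((3 * g).choose (3 * j) : ℚ) * (g.choose j : ℚ)) / ((6 * g).choose (6 * j) : ℚ)

/-- Riemann zeta value `ζ(s) = Σ_{n ≥ 1} n⁻ˢ` as a real number. -/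
noncomputable def zetaR (s : ℕ) : ℝ := ∑' n : ℕ, (1 : ℝ) / (n + 1) ^ s

/-- `V1(g) = Vol(Γ₁(g))`, the contribution of one-cylinder square-tiled
surfaces with nonseparating waist curve to the Masur–Veech volume `Vol 𝒬_g`,
expressed via the sequence `a` of normalized 2-correlators. -/
noncomputable def V1 (a : ℕ → ℕ → ℚ) (g : ℕ) : ℝ :=
  zetaR (6 * g - 6) * ((4 * g - 4).choose (g - 1) : ℝ) *
    (2 / (3 ^ (g - 1) * 2 ^ (2 * g - 2))) *
    ∑ k ∈ Finset.range (3 * g - 3), ((6 * g - 6).choose (2 * k + 1) : ℝ) * (a (g - 1) k : ℝ)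

/-- `S(g) = Σ_{g₁=1}^{g-1} C(g,g₁)·C(3g-4,3g₁-2)`. -/
def S (g : ℕ) : ℕ :=
  ∑ g₁ ∈ Finset.Icc 1 (g - 1), g.choose g₁ * (3 * g - 4).choose (3 * g₁ - 2)

/-- `W(g) = 2·ζ(6g-6)·C(4g-4,g)·12⁻ᵍ·S(g)`, the total contribution of
one-cylinder square-tiled surfaces with separating waist curve. -/
noncomputable def W (g : ℕ) : ℝ :=
  2 * zetaR (6 * g - 6) * ((4 * g - 4).choose g : ℝ) * (12 : ℝ)⁻¹ ^ g * (S g : ℝ)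


/-- For every integer `g ≥ 1`, the normalized 2-correlators
satisfy `a_{g,0} = a_{g,3g-1} = 1`, `a_{g,1} = a_{g,3g-2} = 1 - 2/(6g-1)`, and
`1 - 2/(6g-1) < a_{g,k} < 1` for all `2 ≤ k ≤ 3g-3`. -/
theorem stmt0 (g : ℕ) (hg : 1 ≤ g) (a : ℕ → ℚ) (ha : IsCorr g a) :
    a 0 = 1 ∧ a (3 * g - 1) = 1 ∧
    a 1 = 1 - 2 / (6 * (g : ℚ) - 1) ∧ a (3 * g - 2) = 1 - 2 / (6 * (g : ℚ) - 1) ∧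
    ∀ k : ℕ, 2 ≤ k → k ≤ 3 * g - 3 →
      1 - 2 / (6 * (g : ℚ) - 1) < a k ∧ a k < 1 := by
  refine ⟨ha.1, ?_, a1_eq g hg a ha, ?_, ?_⟩
  · have h := ha.2.2 0 (by omega)
    rw [Nat.sub_zero] at h
    rw [← h]; exact ha.1
  · have h := ha.2.2 1 (by omega)
    rw [show 3*g-1-1 = 3*g-2 by omega] at h
    rw [← h]; exact a1_eq g hg a ha
  · intro k hk2 hk3
    have hg2 : 2 ≤ g := by omega
    by_cases hc : k ≤ (3*g-1)/2
    · exact middle g hg2 a ha k hk2 hc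
    · have h := ha.2.2 k (by omega)
      rw [h]
      exact middle g hg2 a ha (3*g-1-k) (by omega) (by omega)
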